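/- Let (X,μ) and (Y,ν) be σ-finite measure spaces, let T : L¹(X,μ) → L¹(Y,ν) be a positive linear map that is subunital (T applied to functions bounded by 1 yields functions bounded by 1) and integral-non-increasing (∫ T f dν ≤ ∫ f dμ for f ≥ 0), and let f ∈ L¹(X,μ)⁺. Then f submajorizes T(f), i.e., L_{Tf}(t) ≤ L_f(t) for all t > 0. -/

import Mathlib

open MeasureTheory Set
open scoped ENNReal

/-- The Lorenz curve of `g` given by the variational formula
`L_g(t) = sup { ∫ e·g dμ : e ∈ L¹, measurable, 0 ≤ e ≤ 1, ∫ e dμ ≤ t }`. -/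
noncomputable def LorenzR {X : Type*} [MeasurableSpace X] (μ : Measure X)
    (g : X → ℝ) (t : ℝ) : ℝ :=
  sSup {c : ℝ | ∃ e : X → ℝ, Measurable e ∧ Integrable e μ ∧
    (∀ x, 0 ≤ e x ∧ e x ≤ 1) ∧ (∫ x, e x ∂μ) ≤ t ∧ c = ∫ x, e x * g x ∂μ}

lemma dss_key {X Y : Type*} [MeasurableSpace X] [MeasurableSpace Y]
    {μ : Measure X} {ν : Measure Y}
    (T : Lp ℝ 1 μ →ₗ[ℝ] Lp ℝ 1 ν)
    (hpos : ∀ h : Lp ℝ 1 μ, 0 ≤ h → 0 ≤ T h)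
    (hsub : ∀ h : Lp ℝ 1 μ, (∀ᵐ x ∂μ, 0 ≤ h x ∧ h x ≤ 1) →
      (∀ᵐ y ∂ν, (T h) y ≤ 1))
    (hint : ∀ h : Lp ℝ 1 μ, 0 ≤ h → ∫ y, (T h) y ∂ν ≤ ∫ x, h x ∂μ)
    (f : Lp ℝ 1 μ) (hfpos : 0 ≤ f)
    {t s : ℝ} (hs : 0 < s)
    (e : Y → ℝ) (he : Measurable e) (heint : Integrable e ν)
    (he01 : ∀ y, 0 ≤ e y ∧ e y ≤ 1) (heI : ∫ y, e y ∂ν ≤ t) :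
    ∫ y, e y * (T f) y ∂ν ≤ (∫ x, max (f x - s) 0 ∂μ) + s * t := by
  have hF0 : 0 ≤ᵐ[μ] ⇑f := (Lp.coeFn_nonneg f).mpr hfpos
  have hFint : Integrable (⇑f) μ := L1.integrable_coeFn f
  set g : X → ℝ := fun x => max (f x - s) 0 with hgdef
  have hgmeas : Measurable g :=
    ((Lp.stronglyMeasurable f).measurable.sub measurable_const).max measurable_const
  have hgint : Integrable g μ := by
    refine hFint.mono hgmeas.aestronglyMeasurable (Filter.Eventually.of_forall fun x => ?_)
    simp only [hgdef, Real.norm_eq_abs]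
    rw [abs_of_nonneg (le_max_right _ _)]
    rcases le_or_gt (f x - s) 0 with h | h
    · simp only [max_eq_right h]; exact abs_nonneg (f x)
    · calc max (f x - s) 0 = f x - s := max_eq_left h.le
        _ ≤ f x := by linarith
        _ ≤ |f x| := le_abs_self _
  set G : Lp ℝ 1 μ := (memLp_one_iff_integrable.mpr hgint).toLp g with hGdef
  have hG : ⇑G =ᵐ[μ] g := MemLp.coeFn_toLp _
  have hGpos : 0 ≤ G := by
    rw [← Lp.coeFn_nonneg]
    filter_upwards [hG] with x hx
    rw [hx]; exact le_max_right _ _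
  set H : Lp ℝ 1 μ := f - G with hHdef
  have hH : ⇑H =ᵐ[μ] fun x => f x - g x := by
    filter_upwards [Lp.coeFn_sub f G, hG] with x h1 h2
    rw [h1, Pi.sub_apply, h2]
  have hH01 : ∀ᵐ x ∂μ, 0 ≤ H x ∧ H x ≤ s := by
    filter_upwards [hH, hF0] with x h1 h2
    simp only [Pi.zero_apply] at h2
    rw [h1]
    simp only [hgdef]
    rcases le_or_gt (f x - s) 0 with h | h
    · rw [max_eq_right h]; constructor <;> linarith
    · rw [max_eq_left h.le]; constructor <;> linarith
  have hHpos : 0 ≤ H := by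
    rw [← Lp.coeFn_nonneg]
    filter_upwards [hH01] with x hx using hx.1
  have hTHle : ∀ᵐ y ∂ν, (T H) y ≤ s := by
    have h1 : ∀ᵐ x ∂μ, 0 ≤ (s⁻¹ • H) x ∧ (s⁻¹ • H) x ≤ 1 := by
      filter_upwards [Lp.coeFn_smul s⁻¹ H, hH01] with x h1 h2
      rw [h1]
      simp only [Pi.smul_apply, smul_eq_mul]
      constructor
      · exact mul_nonneg (by positivity) h2.1
      · rw [inv_mul_le_iff₀ hs, mul_one]; exact h2.2
    have h2 := hsub _ h1
    have h3 : T (s⁻¹ • H) = s⁻¹ • T H := map_smul T _ _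
    filter_upwards [h2, h3 ▸ Lp.coeFn_smul s⁻¹ (T H)] with y hy1 hy2
    rw [hy2] at hy1
    simp only [Pi.smul_apply, smul_eq_mul] at hy1
    calc (T H) y = s * (s⁻¹ * (T H) y) := by field_simp
      _ ≤ s * 1 := by nlinarith
      _ = s := mul_one s
  have hTGpos : 0 ≤ᵐ[ν] ⇑(T G) := (Lp.coeFn_nonneg _).mpr (hpos G hGpos)
  have hTfeq : ⇑(T f) =ᵐ[ν] fun y => (T G) y + (T H) y := by
    have : G + H = f := by rw [hHdef]; abel
    have h2 : T f = T G + T H := by rw [← this, map_add]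
    rw [h2]; exact Lp.coeFn_add _ _
  have hbd : ∃ C, ∀ y, ‖e y‖ ≤ C :=
    ⟨1, fun y => by rw [Real.norm_eq_abs, abs_of_nonneg (he01 y).1]; exact (he01 y).2⟩
  have hiTG : Integrable (fun y => e y * (T G) y) ν :=
    (L1.integrable_coeFn (T G)).bdd_mul he.aestronglyMeasurable (Filter.Eventually.of_forall hbd.choose_spec)
  have hiTH : Integrable (fun y => e y * (T H) y) ν :=
    (L1.integrable_coeFn (T H)).bdd_mul he.aestronglyMeasurable (Filter.Eventually.of_forall hbd.choose_spec)
  have hsplit : ∫ y, e y * (T f) y ∂ν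
      = (∫ y, e y * (T G) y ∂ν) + ∫ y, e y * (T H) y ∂ν := by
    rw [← integral_add hiTG hiTH]
    refine integral_congr_ae ?_
    filter_upwards [hTfeq] with y hy
    rw [hy]; ring
  have h1 : ∫ y, e y * (T G) y ∂ν ≤ ∫ x, max (f x - s) 0 ∂μ := by
    calc ∫ y, e y * (T G) y ∂ν ≤ ∫ y, (T G) y ∂ν := by
          refine integral_mono_ae hiTG (L1.integrable_coeFn _) ?_
          filter_upwards [hTGpos] with y hy
          exact mul_le_of_le_one_left hy (he01 y).2
      _ ≤ ∫ x, G x ∂μ := hint G hGpos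
      _ = ∫ x, max (f x - s) 0 ∂μ := integral_congr_ae hG
  have h2 : ∫ y, e y * (T H) y ∂ν ≤ s * t := by
    calc ∫ y, e y * (T H) y ∂ν ≤ ∫ y, s * e y ∂ν := by
          refine integral_mono_ae hiTH (heint.const_mul s) ?_
          filter_upwards [hTHle] with y hy
          calc e y * (T H) y ≤ e y * s := mul_le_mul_of_nonneg_left hy (he01 y).1
            _ = s * e y := mul_comm _ _
      _ = s * ∫ y, e y ∂ν := integral_const_mul s _
      _ ≤ s * t := by nlinarith
  linarith

lemma aux_int_max {X : Type*} [MeasurableSpace X] {μ : Measure X} {F : X → ℝ} (hFint : Integrable F μ) (hFm : Measurable F)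
    {s : ℝ} (hs : 0 ≤ s) : Integrable (fun x => max (F x - s) 0) μ := by
  refine hFint.mono ((hFm.sub measurable_const).max measurable_const).aestronglyMeasurable
    (Filter.Eventually.of_forall fun x => ?_)
  simp only [Real.norm_eq_abs]
  rw [abs_of_nonneg (le_max_right _ _)]
  rcases le_or_gt (F x - s) 0 with h | h
  · rw [max_eq_right h]; exact abs_nonneg (F x)
  · calc max (F x - s) 0 = F x - s := max_eq_left h.le
      _ ≤ F x := by linarith
      _ ≤ |F x| := le_abs_self _

lemma dss_mem {X : Type*} [MeasurableSpace X] {μ : Measure X}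
    (f : Lp ℝ 1 μ) (hfpos : 0 ≤ f) {t : ℝ} (ht : 0 < t)
    (c : ℝ) (hc : ∀ s : ℝ, 0 < s → c ≤ (∫ x, max (f x - s) 0 ∂μ) + s * t)
    (hc0 : c ≤ ∫ x, f x ∂μ) :
    c ≤ LorenzR μ (⇑f) t := by
  have hFmeas : Measurable (⇑f) := (Lp.stronglyMeasurable f).measurable
  have hFint : Integrable (⇑f) μ := L1.integrable_coeFn f
  have hF0 : 0 ≤ᵐ[μ] ⇑f := (Lp.coeFn_nonneg f).mpr hfpos
  have hBdd : BddAbove {c : ℝ | ∃ e : X → ℝ, Measurable e ∧ Integrable e μ ∧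
      (∀ x, 0 ≤ e x ∧ e x ≤ 1) ∧ (∫ x, e x ∂μ) ≤ t ∧ c = ∫ x, e x * f x ∂μ} := by
    refine ⟨∫ x, |f x| ∂μ, ?_⟩
    rintro c ⟨e, he, heint, he01, heI, rfl⟩
    refine integral_mono_ae
      (hFint.bdd_mul he.aestronglyMeasurable
        (Filter.Eventually.of_forall (fun x => (by rw [Real.norm_eq_abs, abs_of_nonneg (he01 x).1]; exact (he01 x).2 : ‖e x‖ ≤ 1))))
      hFint.abs (Filter.Eventually.of_forall fun x => ?_)
    calc e x * f x ≤ |e x * f x| := le_abs_self _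
      _ = |e x| * |f x| := abs_mul _ _
      _ ≤ 1 * |f x| := by
          refine mul_le_mul_of_nonneg_right ?_ (abs_nonneg _)
          rw [abs_of_nonneg (he01 x).1]; exact (he01 x).2
      _ = |f x| := one_mul _
  set τ : ℝ≥0∞ := ENNReal.ofReal t with hτdef
  have hτpos : 0 < τ := ENNReal.ofReal_pos.mpr ht
  have hτtop : τ ≠ ∞ := ENNReal.ofReal_ne_top
  -- the set of thresholds
  set Sset : Set ℝ := {s : ℝ | 0 < s ∧ μ {x | s < f x} ≤ τ} with hSdef
  have hSne : Sset.Nonempty := by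
    have hanti : Antitone (fun n : ℕ => {x | (n : ℝ) + 1 < f x}) := by
      intro n m hnm x hx
      simp only [mem_setOf_eq] at hx ⊢
      have : (n : ℝ) ≤ m := Nat.cast_le.mpr hnm
      linarith
    have hiInter : ⋂ n : ℕ, {x | (n : ℝ) + 1 < f x} = ∅ := by
      ext x
      simp only [mem_iInter, mem_setOf_eq, mem_empty_iff_false, iff_false, not_forall, not_lt]
      obtain ⟨n, hn⟩ := exists_nat_gt (f x)
      exact ⟨n, by linarith⟩
    have heq := hanti.measure_iInter
      (fun n => (measurableSet_lt measurable_const hFmeas).nullMeasurableSet)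
      ⟨0, by
        refine (lt_of_le_of_lt (measure_mono ?_) (hFint.measure_gt_lt_top one_pos)).ne
        intro x hx; simp only [mem_setOf_eq, Nat.cast_zero] at hx ⊢; linarith⟩
    rw [hiInter, measure_empty] at heq
    have : ⨅ n : ℕ, μ {x | (n : ℝ) + 1 < f x} < τ := by rw [← heq]; exact hτpos
    rw [iInf_lt_iff] at this
    obtain ⟨n, hn⟩ := this
    exact ⟨(n : ℝ) + 1, by positivity, hn.le⟩
  set s0 : ℝ := sInf Sset with hs0def
  have hs0nn : 0 ≤ s0 := le_csInf hSne fun s hs => hs.1.le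
  have hup : ∀ s : ℝ, s0 < s → μ {x | s < f x} ≤ τ := by
    intro s hlt
    obtain ⟨s', hs'S, hs's⟩ := exists_lt_of_csInf_lt hSne hlt
    refine le_trans (measure_mono fun x hx => ?_) hs'S.2
    simp only [mem_setOf_eq] at hx ⊢; linarith
  unfold LorenzR
  rcases eq_or_lt_of_le hs0nn with hz | hs0pos
  · -- s0 = 0 : use the indicator of {0 < f}
    set A := {x | 0 < f x} with hAdef
    have hAmeas : MeasurableSet A := measurableSet_lt measurable_const hFmeas
    have hA : μ A ≤ τ := by
      have hmono : Monotone (fun n : ℕ => {x | 1 / ((n : ℝ) + 1) < f x}) := by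
        intro n m hnm x hx
        simp only [mem_setOf_eq] at hx ⊢
        have h1 : (n : ℝ) + 1 ≤ (m : ℝ) + 1 := by
          have : (n : ℝ) ≤ m := Nat.cast_le.mpr hnm
          linarith
        have h2 := one_div_le_one_div_of_le (by positivity : (0:ℝ) < (n:ℝ) + 1) h1
        linarith
      have hun : A = ⋃ n : ℕ, {x | 1 / ((n : ℝ) + 1) < f x} := by
        ext x
        simp only [hAdef, mem_setOf_eq, mem_iUnion]
        constructor
        · intro hx
          obtain ⟨n, hn⟩ := exists_nat_one_div_lt hx
          exact ⟨n, hn⟩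
        · rintro ⟨n, hn⟩
          have : (0:ℝ) < 1 / ((n : ℝ) + 1) := by positivity
          linarith
      rw [hun, hmono.measure_iUnion]
      exact iSup_le fun n => hup _ (by rw [← hz]; positivity)
    have hAfin : μ A < ∞ := lt_of_le_of_lt hA (lt_top_iff_ne_top.mpr hτtop)
    set e' : X → ℝ := A.indicator (fun _ => 1) with he'def
    have hval : ∫ x, e' x * f x ∂μ = ∫ x, f x ∂μ := by
      have h1 : ∀ x, e' x * f x = max (f x) 0 := by
        intro x
        by_cases hx : x ∈ A
        · rw [he'def, indicator_of_mem hx, one_mul, max_eq_left]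
          exact le_of_lt hx
        · rw [he'def, indicator_of_notMem hx, zero_mul, eq_comm, max_eq_right]
          simpa [hAdef] using hx
      rw [integral_congr_ae (Filter.Eventually.of_forall h1)]
      refine integral_congr_ae ?_
      filter_upwards [hF0] with x hx
      exact max_eq_left hx
    refine le_trans hc0 (le_csSup hBdd ⟨e', measurable_const.indicator hAmeas,
      (integrable_indicator_iff hAmeas).mpr (integrableOn_const hAfin.ne),
      ?_, ?_, hval.symm⟩)
    · intro x
      by_cases hx : x ∈ A <;>
        simp [he'def, indicator_of_mem, indicator_of_notMem, hx]
    · rw [he'def, integral_indicator_const (1:ℝ) hAmeas, smul_eq_mul, mul_one]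
      calc (μ A).toReal ≤ τ.toReal := ENNReal.toReal_mono hτtop hA
        _ = t := ENNReal.toReal_ofReal ht.le
  · -- 0 < s0
    set A := {x | s0 < f x} with hAdef
    have hAmeas : MeasurableSet A := measurableSet_lt measurable_const hFmeas
    have hAτ : μ A ≤ τ := by
      have hmono : Monotone (fun n : ℕ => {x | s0 + 1 / ((n : ℝ) + 1) < f x}) := by
        intro n m hnm x hx
        simp only [mem_setOf_eq] at hx ⊢
        have h1 : (n : ℝ) + 1 ≤ (m : ℝ) + 1 := by
          have : (n : ℝ) ≤ m := Nat.cast_le.mpr hnm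
          linarith
        have h2 := one_div_le_one_div_of_le (by positivity : (0:ℝ) < (n:ℝ) + 1) h1
        linarith
      have hun : A = ⋃ n : ℕ, {x | s0 + 1 / ((n : ℝ) + 1) < f x} := by
        ext x
        simp only [hAdef, mem_setOf_eq, mem_iUnion]
        constructor
        · intro hx
          obtain ⟨n, hn⟩ := exists_nat_one_div_lt (sub_pos.mpr hx)
          exact ⟨n, by linarith⟩
        · rintro ⟨n, hn⟩
          have : (0:ℝ) < 1 / ((n : ℝ) + 1) := by positivity
          linarith
      rw [hun, hmono.measure_iUnion]
      refine iSup_le fun n => hup _ ?_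
      have : (0:ℝ) < 1 / ((n : ℝ) + 1) := by positivity
      linarith
    have hAfin : μ A < ∞ := lt_of_le_of_lt hAτ (lt_top_iff_ne_top.mpr hτtop)
    set B := {x | f x = s0} with hBdef
    have hBmeas : MeasurableSet B := by
      have h1 : B = ⇑f ⁻¹' {s0} := by
        ext x; simp [hBdef]
      rw [h1]
      exact hFmeas (measurableSet_singleton s0)
    have hBfin : μ B < ∞ := by
      refine lt_of_le_of_lt (measure_mono fun x hx => ?_) (hFint.measure_ge_lt_top hs0pos)
      simp only [hBdef, mem_setOf_eq] at hx ⊢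
      linarith [hx.ge]
    have hge : τ ≤ μ {x | s0 ≤ f x} := by
      have hanti : Antitone (fun n : ℕ => {x | s0 - s0 / ((n : ℝ) + 2) < f x}) := by
        intro n m hnm x hx
        simp only [mem_setOf_eq] at hx ⊢
        have h1 : (n : ℝ) + 2 ≤ (m : ℝ) + 2 := by
          have : (n : ℝ) ≤ m := Nat.cast_le.mpr hnm
          linarith
        have h2 : s0 / ((m : ℝ) + 2) ≤ s0 / ((n : ℝ) + 2) :=
          div_le_div_of_nonneg_left hs0pos.le (by positivity) h1
        linarith
      have hiInt : (⋂ n : ℕ, {x | s0 - s0 / ((n : ℝ) + 2) < f x}) = {x | s0 ≤ f x} := by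
        ext x
        simp only [mem_iInter, mem_setOf_eq]
        constructor
        · intro hx
          by_contra hlt
          push_neg at hlt
          obtain ⟨n, hn⟩ := exists_nat_one_div_lt
            (show (0:ℝ) < (s0 - f x) / s0 from div_pos (by linarith) hs0pos)
          have h2 : s0 * (1 / ((n:ℝ) + 1)) < s0 * ((s0 - f x) / s0) :=
            mul_lt_mul_of_pos_left hn hs0pos
          rw [mul_div_cancel₀ _ (ne_of_gt hs0pos)] at h2
          have h3 : s0 / ((n:ℝ) + 2) ≤ s0 / ((n:ℝ) + 1) :=
            div_le_div_of_nonneg_left hs0pos.le (by positivity) (by linarith)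
          have h4 := hx n
          rw [mul_one_div] at h2
          linarith
        · intro hx n
          have h1 : 0 < s0 / ((n : ℝ) + 2) := by positivity
          linarith
      have heq := hanti.measure_iInter
        (fun n => (measurableSet_lt measurable_const hFmeas).nullMeasurableSet)
        ⟨0, by
          refine (lt_of_le_of_lt (measure_mono fun x hx => ?_)
            (hFint.measure_ge_lt_top (half_pos hs0pos))).ne
          simp only [mem_setOf_eq, Nat.cast_zero] at hx ⊢
          linarith⟩
      rw [hiInt] at heq
      rw [heq]
      refine le_iInf fun n => ?_
      by_contra hlt
      push_neg at hlt
      have hsn_pos : 0 < s0 - s0 / ((n : ℝ) + 2) := by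
        have h1 : s0 / ((n : ℝ) + 2) < s0 := by
          rw [div_lt_iff₀ (by positivity)]
          nlinarith
        linarith
      have hmem : (s0 - s0 / ((n : ℝ) + 2)) ∈ Sset := ⟨hsn_pos, hlt.le⟩
      have h5 : s0 ≤ s0 - s0 / ((n : ℝ) + 2) :=
        csInf_le ⟨0, fun s hs => hs.1.le⟩ hmem
      have h6 : 0 < s0 / ((n : ℝ) + 2) := by positivity
      linarith
    have hABτ : τ ≤ μ A + μ B := by
      refine le_trans hge (le_trans (measure_mono fun x hx => ?_) (measure_union_le A B))
      simp only [mem_setOf_eq] at hx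
      simp only [mem_union, hAdef, hBdef, mem_setOf_eq]
      rcases lt_or_eq_of_le hx with h | h
      · exact Or.inl h
      · exact Or.inr h.symm
    set a := (μ A).toReal with hadef
    set b := (μ B).toReal with hbdef
    have hb0 : 0 ≤ b := ENNReal.toReal_nonneg
    have hat : a ≤ t := by
      calc a ≤ τ.toReal := ENNReal.toReal_mono hτtop hAτ
        _ = t := ENNReal.toReal_ofReal ht.le
    have htab : t ≤ a + b := by
      have h1 : τ.toReal ≤ (μ A + μ B).toReal :=
        ENNReal.toReal_mono (ENNReal.add_ne_top.mpr ⟨hAfin.ne, hBfin.ne⟩) hABτ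
      rw [ENNReal.toReal_add hAfin.ne hBfin.ne] at h1
      have h2 : τ.toReal = t := ENNReal.toReal_ofReal ht.le
      rw [h2] at h1
      exact h1
    set θ : ℝ := if b = 0 then 0 else (t - a) / b with hθdef
    obtain ⟨hθ0, hθ1, hθt⟩ : 0 ≤ θ ∧ θ ≤ 1 ∧ a + θ * b = t := by
      by_cases hb : b = 0
      · rw [hθdef, if_pos hb]
        refine ⟨le_refl 0, zero_le_one, ?_⟩
        rw [hb] at htab ⊢
        simp only [mul_zero, add_zero]
        linarith
      · have hbpos : 0 < b := lt_of_le_of_ne hb0 (Ne.symm hb)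
        rw [hθdef, if_neg hb]
        refine ⟨div_nonneg (by linarith) hb0,
          (div_le_one hbpos).mpr (by linarith), ?_⟩
        field_simp
        ring
    set e' : X → ℝ := fun x => A.indicator (fun _ => 1) x + B.indicator (fun _ => θ) x
      with he'def
    have hABdisj : ∀ x, x ∈ A → x ∉ B := by
      intro x hxa hxb
      have h1 : s0 < f x := hxa
      have h2 : f x = s0 := hxb
      linarith
    have he'meas : Measurable e' :=
      (measurable_const.indicator hAmeas).add (measurable_const.indicator hBmeas)
    have hiA1 : Integrable (A.indicator (fun _ => (1:ℝ))) μ :=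
      (integrable_indicator_iff hAmeas).mpr (integrableOn_const hAfin.ne)
    have hiBθ : Integrable (B.indicator (fun _ => θ)) μ :=
      (integrable_indicator_iff hBmeas).mpr (integrableOn_const hBfin.ne)
    have he'int : Integrable e' μ := hiA1.add hiBθ
    have he'01 : ∀ x, 0 ≤ e' x ∧ e' x ≤ 1 := by
      intro x
      simp only [he'def]
      by_cases hxa : x ∈ A
      · have hxb := hABdisj x hxa
        rw [indicator_of_mem hxa, indicator_of_notMem hxb]
        norm_num
      · by_cases hxb : x ∈ B
        · rw [indicator_of_notMem hxa, indicator_of_mem hxb]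
          constructor <;> simp <;> [exact hθ0; exact hθ1]
        · rw [indicator_of_notMem hxa, indicator_of_notMem hxb]
          norm_num
    have he'I : ∫ x, e' x ∂μ = t := by
      simp only [he'def]
      rw [integral_add hiA1 hiBθ, integral_indicator_const (1:ℝ) hAmeas,
        integral_indicator_const θ hBmeas, smul_eq_mul, smul_eq_mul, mul_one]
      rw [← hθt]; simp only [measureReal_def, hadef, hbdef]; ring
    have hGint : Integrable (fun x => max (f x - s0) 0) μ :=
      aux_int_max hFint hFmeas hs0pos.le
    have hval : ∫ x, e' x * f x ∂μ = (∫ x, max (f x - s0) 0 ∂μ) + s0 * t := by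
      have hp1 : ∀ x, e' x * f x
          = A.indicator (fun y => f y) x + θ * B.indicator (fun _ => s0) x := by
        intro x
        simp only [he'def]
        by_cases hxa : x ∈ A
        · have hxb := hABdisj x hxa
          rw [indicator_of_mem hxa, indicator_of_notMem hxb, indicator_of_mem hxa,
            indicator_of_notMem hxb]
          ring
        · by_cases hxb : x ∈ B
          · have hfx : f x = s0 := hxb
            rw [indicator_of_notMem hxa, indicator_of_mem hxb, indicator_of_notMem hxa,
              indicator_of_mem hxb, hfx]
            ring
          · rw [indicator_of_notMem hxa, indicator_of_notMem hxb, indicator_of_notMem hxa,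
              indicator_of_notMem hxb]
            ring
      have hiAf : Integrable (A.indicator (⇑f)) μ :=
        (integrable_indicator_iff hAmeas).mpr hFint.integrableOn
      have hiBs : Integrable (B.indicator (fun _ => s0)) μ :=
        (integrable_indicator_iff hBmeas).mpr (integrableOn_const hBfin.ne)
      rw [integral_congr_ae (Filter.Eventually.of_forall hp1),
        integral_add hiAf (hiBs.const_mul θ), integral_const_mul θ _,
        integral_indicator_const s0 hBmeas]
      have hAf : ∫ x, A.indicator (⇑f) x ∂μ = (∫ x, max (f x - s0) 0 ∂μ) + s0 * a := by
        have hp2 : ∀ x, A.indicator (⇑f) x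
            = max (f x - s0) 0 + A.indicator (fun _ => s0) x := by
          intro x
          by_cases hxa : x ∈ A
          · have h1 : s0 < f x := hxa
            rw [indicator_of_mem hxa, indicator_of_mem hxa,
              max_eq_left (by linarith : (0:ℝ) ≤ f x - s0)]
            ring
          · have h1 : ¬ s0 < f x := hxa
            rw [indicator_of_notMem hxa, indicator_of_notMem hxa,
              max_eq_right (by push_neg at h1; linarith : f x - s0 ≤ 0)]
            ring
        rw [integral_congr_ae (Filter.Eventually.of_forall hp2),
          integral_add hGint ((integrable_indicator_iff hAmeas).mpr (integrableOn_const hAfin.ne)), integral_indicator_const s0 hAmeas, smul_eq_mul]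
        simp only [measureReal_def, hadef]; ring
      rw [hAf, smul_eq_mul]
      rw [← hθt]; simp only [measureReal_def, hadef, hbdef]; ring
    refine le_trans (hc s0 hs0pos) ?_
    rw [← hval]
    exact le_csSup hBdd ⟨e', he'meas, he'int, he'01, le_of_eq he'I, rfl⟩

/-- A doubly substochastic map `T : L¹(X,μ) → L¹(Y,ν)` (positive, subunital,
integral-non-increasing) produces an output submajorized by the input:
`L_{Tf}(t) ≤ L_f(t)` for all `t > 0`. -/
theorem stmt2 {X Y : Type*} [MeasurableSpace X] [MeasurableSpace Y]
    (μ : Measure X) (ν : Measure Y) [SigmaFinite μ] [SigmaFinite ν]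
    (T : Lp ℝ 1 μ →ₗ[ℝ] Lp ℝ 1 ν)
    (hpos : ∀ h : Lp ℝ 1 μ, 0 ≤ h → 0 ≤ T h)
    (hsub : ∀ h : Lp ℝ 1 μ, (∀ᵐ x ∂μ, 0 ≤ h x ∧ h x ≤ 1) →
      (∀ᵐ y ∂ν, (T h) y ≤ 1))
    (hint : ∀ h : Lp ℝ 1 μ, 0 ≤ h → ∫ y, (T h) y ∂ν ≤ ∫ x, h x ∂μ)
    (f : Lp ℝ 1 μ) (hfpos : 0 ≤ f) :
    ∀ t : ℝ, 0 < t → LorenzR ν (⇑(T f)) t ≤ LorenzR μ (⇑f) t := by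
  intro t ht
  have hF0 : 0 ≤ᵐ[μ] ⇑f := (Lp.coeFn_nonneg f).mpr hfpos
  have hzero : (0:ℝ) ≤ LorenzR μ (⇑f) t :=
    dss_mem f hfpos ht 0
      (fun s hs => add_nonneg (integral_nonneg fun x => le_max_right _ _)
        (by positivity))
      (integral_nonneg_of_ae hF0)
  unfold LorenzR
  refine Real.sSup_le ?_ hzero
  rintro c ⟨e, he, heint, he01, heI, rfl⟩
  refine dss_mem f hfpos ht _ ?_ ?_
  · intro s hs
    exact dss_key T hpos hsub hint f hfpos hs e he heint he01 heI
  · have hbd : ∃ C, ∀ y, ‖e y‖ ≤ C :=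
      ⟨1, fun y => by rw [Real.norm_eq_abs, abs_of_nonneg (he01 y).1]; exact (he01 y).2⟩
    have h1 : ∫ y, e y * (T f) y ∂ν ≤ ∫ y, (T f) y ∂ν := by
      refine integral_mono_ae
        ((L1.integrable_coeFn (T f)).bdd_mul he.aestronglyMeasurable (Filter.Eventually.of_forall hbd.choose_spec))
        (L1.integrable_coeFn _) ?_
      filter_upwards [(Lp.coeFn_nonneg (T f)).mpr (hpos f hfpos)] with y hy
      exact mul_le_of_le_one_left hy (he01 y).2
    exact h1.trans (hint f hfpos)
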